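/- For every integer k ≥ 1, let g_k = p^A(2k|1 / 1|2k), a Frobenius type-A seaweed. Then the spectrum of g_k is the multiset ⋃_{i=1}^{k} { (−k+i) with multiplicity 4i−2, (k−i+1) with multiplicity 4i−2 }. Moreover, g_k has the log-concave spectrum property. -/

import Mathlib

namespace Seaweed

/-- Positions `i` and `j` (1-indexed) are joined by an arc of the composition `c`:
they lie in the same block of `c` and are placed symmetrically within it. -/
def blockPair (c : List ℕ) (i j : ℕ) : Prop :=
  ∃ k, k < c.length ∧ (c.take k).sum < i ∧ (c.take k).sum < j ∧
    i + j = 2 * (c.take k).sum + c.getD k 0 + 1 ∧ i ≠ j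

lemma blockPair_symm {c : List ℕ} {i j : ℕ} (h : blockPair c i j) : blockPair c j i := by
  obtain ⟨k, hk, hi, hj, hsum, hne⟩ := h
  exact ⟨k, hk, hj, hi, by omega, hne.symm⟩

/-- The meander `M(a|b)` of the pair of compositions `(a, b)`, as a simple graph on `ℕ`
(positions `1, …, a.sum` carry the meander; all other naturals are isolated).
Top edges come from `a`, bottom edges from `b`. -/
def meander (a b : List ℕ) : SimpleGraph ℕ where
  Adj i j := blockPair a i j ∨ blockPair b i j
  symm := ⟨fun _ _ h => h.imp blockPair_symm blockPair_symm⟩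
  loopless := ⟨by
    rintro i (⟨k, _, _, _, _, hne⟩ | ⟨k, _, _, _, _, hne⟩) <;> exact hne rfl⟩

/-- The directed-edge relation of the oriented meander: top edges are oriented
right-to-left, bottom edges left-to-right. -/
def dirEdge (a b : List ℕ) (x y : ℕ) : Prop :=
  (blockPair a x y ∧ y < x) ∨ (blockPair b x y ∧ x < y)

open scoped Classical in
/-- The weight of a walk in the oriented meander: each step taken in agreement with
the orientation counts `+1`, each step against it counts `-1`. -/
noncomputable def walkWeight (a b : List ℕ) {i j : ℕ} (w : (meander a b).Walk i j) : ℤ :=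
  (w.darts.map fun d => if dirEdge a b d.toProd.1 d.toProd.2 then (1 : ℤ) else -1).sum

open scoped Classical in
/-- `w(P_{i,j}(a|b))`: the weight of the (unique, when the meander consists of a single
path) path from `v_i` to `v_j` in the oriented meander. -/
noncomputable def pathWeight (a b : List ℕ) (i j : ℕ) : ℤ :=
  if h : ∃ p : (meander a b).Walk i j, p.IsPath then walkWeight a b h.choose else 0

/-- The meander of `(a, b)` consists of a single path: it has no cycles (in particular no
doubled top/bottom edge, which would be a 2-cycle) and all positions `1, …, n` are
connected.  This is exactly the condition for `p^A(a|b)` to be Frobenius. -/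
def IsSinglePath (a b : List ℕ) : Prop :=
  (meander a b).IsAcyclic ∧
  (∀ i j, i ∈ Finset.Icc 1 a.sum → j ∈ Finset.Icc 1 a.sum → (meander a b).Reachable i j) ∧
  ∀ i j, ¬(blockPair a i j ∧ blockPair b i j)

/-- `i` and `j` lie in the same block of the composition `c`. -/
def sameBlock (c : List ℕ) (i j : ℕ) : Prop :=
  ∃ k, k < c.length ∧ (c.take k).sum < i ∧ i ≤ (c.take k).sum + c.getD k 0 ∧
    (c.take k).sum < j ∧ j ≤ (c.take k).sum + c.getD k 0

/-- The matrix position `(i, j)` belongs to the seaweed `p^A(a|b)`. -/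
def seaweedPos (a b : List ℕ) (i j : ℕ) : Prop :=
  (j ≤ i ∧ sameBlock a i j) ∨ (i ≤ j ∧ sameBlock b i j)

open scoped Classical in
/-- The block of the spectrum matrix of `p^A(a|b)` on rows `R` and columns `C`:
the multiset of weights `w(P_{i,j})` over positions `(i,j)` of the seaweed with
`i ∈ R`, `j ∈ C`. -/
noncomputable def spectrumBlock (a b : List ℕ) (R C : Finset ℕ) : Multiset ℤ :=
  ((R ×ˢ C).filter fun p => seaweedPos a b p.1 p.2).val.map fun p => pathWeight a b p.1 p.2

/-- The multiset of all values of the extended spectrum matrix of `p^A(a|b)`: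
the weights `w(P_{i,j})` over all pairs `1 ≤ i, j ≤ n`. -/
noncomputable def extendedValues (a b : List ℕ) : Multiset ℤ :=
  (Finset.Icc 1 a.sum ×ˢ Finset.Icc 1 a.sum).val.map fun p => pathWeight a b p.1 p.2

/-- The spectrum of a Frobenius type-A seaweed `p^A(a|b)`: the multiset of entries of
its spectrum matrix, with one copy of `0` removed. -/
noncomputable def spectrum (a b : List ℕ) : Multiset ℤ :=
  spectrumBlock a b (Finset.Icc 1 a.sum) (Finset.Icc 1 a.sum) - {0}

/-- The extended spectrum: all entries of the extended spectrum matrix, with one copy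
of `0` removed. -/
noncomputable def extendedSpectrum (a b : List ℕ) : Multiset ℤ :=
  extendedValues a b - {0}

/-- Listing the distinct values of the multiset `S` in increasing order, the
corresponding sequence of multiplicities is log-concave. -/
def HasLogConcaveSpectrum (S : Multiset ℤ) : Prop :=
  ∀ i : ℕ, 0 < i → i + 1 < (S.toFinset.sort (· ≤ ·)).length →
    S.count ((S.toFinset.sort (· ≤ ·)).getD (i - 1) 0) *
      S.count ((S.toFinset.sort (· ≤ ·)).getD (i + 1) 0) ≤
      S.count ((S.toFinset.sort (· ≤ ·)).getD i 0) ^ 2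


section Aux
variable {k : ℕ}

lemma bpa {i j : ℕ} : blockPair [2*k, 1] i j ↔ 0 < i ∧ 0 < j ∧ i + j = 2*k+1 := by
  constructor
  · rintro ⟨t, ht, h1, h2, h3, h4⟩
    simp at ht
    interval_cases t <;> simp_all <;> omega
  · rintro ⟨h1, h2, h3⟩
    exact ⟨0, by simp, by simpa using h1, by simpa using h2, by simpa using h3, by omega⟩

lemma bpb {i j : ℕ} : blockPair [1, 2*k] i j ↔ 1 < i ∧ 1 < j ∧ i + j = 2*k+3 := by
  constructor
  · rintro ⟨t, ht, h1, h2, h3, h4⟩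
    simp at ht
    interval_cases t <;> simp_all <;> omega
  · rintro ⟨h1, h2, h3⟩
    exact ⟨1, by simp, by simpa using h1, by simpa using h2, by simp; omega, by omega⟩

lemma adj_iff {x y : ℕ} :
    (meander [2*k,1] [1,2*k]).Adj x y ↔
      (0 < x ∧ 0 < y ∧ x + y = 2*k+1) ∨ (1 < x ∧ 1 < y ∧ x + y = 2*k+3) := by
  show blockPair _ x y ∨ blockPair _ x y ↔ _
  rw [bpa, bpb]

/-- the potential function -/
def fI (k i : ℕ) : ℤ := min ((i:ℤ) - 1) (2*k+1 - i)

lemma step_weight {x y : ℕ} [Decidable (dirEdge [2*k,1] [1,2*k] x y)]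
    (h : (meander [2*k,1] [1,2*k]).Adj x y) :
    (if dirEdge [2*k,1] [1,2*k] x y then (1:ℤ) else -1) = fI k x - fI k y := by
  rw [adj_iff] at h
  by_cases hd : dirEdge [2*k,1] [1,2*k] x y
  · rw [if_pos hd]
    rcases hd with ⟨hb, hlt⟩ | ⟨hb, hlt⟩
    · rw [bpa] at hb; unfold fI; omega
    · rw [bpb] at hb; unfold fI; omega
  · rw [if_neg hd]
    unfold dirEdge at hd
    push_neg at hd
    rw [bpa, bpb] at hd
    obtain ⟨hd1, hd2⟩ := hd
    rcases h with ⟨h1, h2, h3⟩ | ⟨h1, h2, h3⟩ <;> unfold fI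
    · have := hd1 ⟨h1, h2, h3⟩; omega
    · have := hd2 ⟨h1, h2, h3⟩; omega

lemma walkWeight_eq {i j : ℕ} (w : (meander [2*k,1] [1,2*k]).Walk i j) :
    walkWeight [2*k,1] [1,2*k] w = fI k i - fI k j := by
  classical
  induction w with
  | nil => simp [walkWeight]
  | cons h p ih =>
    rw [walkWeight] at ih ⊢
    rw [SimpleGraph.Walk.darts_cons, List.map_cons, List.sum_cons, ih]
    rw [step_weight h]
    ring

end Aux
section Aux2
variable {k : ℕ}

/-- the vertex sequence along the meander path -/
def uu (k s : ℕ) : ℕ := if s % 2 = 0 then s + 1 else 2*k - s + 1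

lemma adj_uu {s : ℕ} (hs : s < 2*k) :
    (meander [2*k,1] [1,2*k]).Adj (uu k s) (uu k (s+1)) := by
  rw [adj_iff]
  unfold uu
  rcases Nat.even_or_odd s with he | ho
  · left
    have h0 : s % 2 = 0 := Nat.even_iff.mp he
    have h1 : (s+1) % 2 = 1 := by omega
    rw [if_pos h0, if_neg (by omega)]
    omega
  · right
    have h0 : s % 2 = 1 := Nat.odd_iff.mp ho
    rw [if_neg (by omega), if_pos (by omega)]
    omega

lemma reach_uu : ∀ s, s ≤ 2*k → (meander [2*k,1] [1,2*k]).Reachable 1 (uu k s) := by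
  intro s
  induction s with
  | zero =>
    intro _
    have h : uu k 0 = 1 := by simp [uu]
    rw [h]
  | succ t ih =>
    intro h
    exact (ih (by omega)).trans (adj_uu (by omega)).reachable

lemma reach_1v {v : ℕ} (h1 : 1 ≤ v) (h2 : v ≤ 2*k+1) :
    (meander [2*k,1] [1,2*k]).Reachable 1 v := by
  rcases Nat.even_or_odd v with he | ho
  · have hv2 : v % 2 = 0 := Nat.even_iff.mp he
    have := reach_uu (k := k) (2*k+1-v) (by omega)
    have hu : uu k (2*k+1-v) = v := by unfold uu; rw [if_neg (by omega)]; omega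
    rwa [hu] at this
  · have hv2 : v % 2 = 1 := Nat.odd_iff.mp ho
    have := reach_uu (k := k) (v-1) (by omega)
    have hu : uu k (v-1) = v := by unfold uu; rw [if_pos (by omega)]; omega
    rwa [hu] at this

lemma pathWeight_eq {i j : ℕ} (hi1 : 1 ≤ i) (hi2 : i ≤ 2*k+1) (hj1 : 1 ≤ j)
    (hj2 : j ≤ 2*k+1) : pathWeight [2*k,1] [1,2*k] i j = fI k i - fI k j := by
  obtain ⟨w⟩ := ((reach_1v hi1 hi2).symm.trans (reach_1v hj1 hj2) :
    (meander [2*k,1] [1,2*k]).Reachable i j)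
  have hex : ∃ p : (meander [2*k,1] [1,2*k]).Walk i j, p.IsPath :=
    ⟨w.bypass, w.bypass_isPath⟩
  rw [pathWeight, dif_pos hex]
  exact walkWeight_eq _

end Aux2
section Aux3
variable {k : ℕ}

lemma map_val_eq_sum {α β : Type*} (s : Finset α) (g : α → β) :
    s.val.map g = ∑ x ∈ s, ({g x} : Multiset β) := by
  classical
  induction s using Finset.induction_on with
  | empty => simp
  | insert _ _ h ih =>
    rw [Finset.insert_val_of_notMem h, Multiset.map_cons, Finset.sum_insert h, ih]
    rfl

lemma sba {i j : ℕ} : sameBlock [2*k, 1] i j ↔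
    (0 < i ∧ i ≤ 2*k ∧ 0 < j ∧ j ≤ 2*k) ∨
    (2*k < i ∧ i ≤ 2*k+1 ∧ 2*k < j ∧ j ≤ 2*k+1) := by
  constructor
  · rintro ⟨t, ht, h1, h2, h3, h4⟩
    simp at ht
    interval_cases t <;> simp_all <;> omega
  · rintro (⟨h1, h2, h3, h4⟩ | ⟨h1, h2, h3, h4⟩)
    · exact ⟨0, by simp, by simpa using h1, by simpa using h2, by simpa using h3,
        by simpa using h4⟩
    · exact ⟨1, by simp, by simpa using h1, by simp; omega, by simpa using h3, by simp; omega⟩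

lemma sbb {i j : ℕ} : sameBlock [1, 2*k] i j ↔
    (i = 1 ∧ j = 1) ∨ (1 < i ∧ i ≤ 2*k+1 ∧ 1 < j ∧ j ≤ 2*k+1) := by
  constructor
  · rintro ⟨t, ht, h1, h2, h3, h4⟩
    simp at ht
    interval_cases t <;> simp_all <;> omega
  · rintro (⟨h1, h2⟩ | ⟨h1, h2, h3, h4⟩)
    · exact ⟨0, by simp, by simp [h1], by simp [h1], by simp [h2], by simp [h2]⟩
    · exact ⟨1, by simp, by simpa using h1, by simp; omega, by simpa using h3, by simp; omega⟩

open scoped Classical in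
lemma specBlock_sum (a b : List ℕ) (R C : Finset ℕ) :
    spectrumBlock a b R C = ∑ i ∈ R, ∑ j ∈ C,
      (if seaweedPos a b i j then ({pathWeight a b i j} : Multiset ℤ) else 0) := by
  classical
  rw [spectrumBlock, map_val_eq_sum, Finset.sum_filter, Finset.sum_product]

lemma sum_seg_lin {M : Type*} [AddCommMonoid M] (H : ℤ → M) (a b : ℕ) :
    ∑ j ∈ Finset.Icc a b, H ((j:ℤ) - 1) = ∑ d ∈ Finset.Icc ((a:ℤ)-1) ((b:ℤ)-1), H d := by
  have himg : Finset.Icc ((a:ℤ)-1) ((b:ℤ)-1)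
      = (Finset.Icc a b).image (fun j : ℕ => (j:ℤ)-1) := by
    ext x
    simp only [Finset.mem_Icc, Finset.mem_image]
    constructor
    · intro hx; exact ⟨(x+1).toNat, by omega, by omega⟩
    · rintro ⟨j, hj, rfl⟩; omega
  rw [himg, Finset.sum_image (fun m _ n _ h => by omega)]

lemma sum_seg_ref {M : Type*} [AddCommMonoid M] (H : ℤ → M) (a b n : ℕ) :
    ∑ j ∈ Finset.Icc a b, H ((n:ℤ) - j) = ∑ d ∈ Finset.Icc ((n:ℤ)-b) ((n:ℤ)-a), H d := by
  by_cases hab : a ≤ b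
  · have himg : Finset.Icc ((n:ℤ)-b) ((n:ℤ)-a)
        = (Finset.Icc a b).image (fun j : ℕ => (n:ℤ)-j) := by
      ext x
      simp only [Finset.mem_Icc, Finset.mem_image]
      constructor
      · intro hx; exact ⟨((n:ℤ)-x).toNat, by omega, by omega⟩
      · rintro ⟨j, hj, rfl⟩; omega
    rw [himg, Finset.sum_image (fun m _ n _ h => by omega)]
  · rw [Finset.Icc_eq_empty (by omega), Finset.Icc_eq_empty (by omega), Finset.sum_empty,
      Finset.sum_empty]

lemma sum_fI_inner {M : Type*} [AddCommMonoid M] (H : ℤ → M) (hk : 1 ≤ k) :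
    ∑ j ∈ Finset.Icc 1 (2*k+1), H (fI k j)
      = (∑ d ∈ Finset.Icc (0:ℤ) k, H d) + ∑ d ∈ Finset.Icc (0:ℤ) ((k:ℤ)-1), H d := by
  have hsplit : Finset.Icc 1 (2*k+1) = Finset.Icc 1 (k+1) ∪ Finset.Icc (k+2) (2*k+1) := by
    ext x; simp only [Finset.mem_Icc, Finset.mem_union]; omega
  have hdisj : Disjoint (Finset.Icc 1 (k+1)) (Finset.Icc (k+2) (2*k+1)) := by
    rw [Finset.disjoint_left]; intro x hx hy
    simp only [Finset.mem_Icc] at hx hy; omega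
  rw [hsplit, Finset.sum_union hdisj]
  congr 1
  · rw [Finset.sum_congr rfl (fun j hj => by
      have h : fI k j = (j:ℤ) - 1 := by
        simp only [Finset.mem_Icc] at hj; unfold fI; omega
      rw [h]), sum_seg_lin]
    congr 1 <;> push_cast <;> ring
  · rw [Finset.sum_congr rfl (fun j hj => by
      have h : fI k j = ((2*k+1 : ℕ):ℤ) - j := by
        simp only [Finset.mem_Icc] at hj; unfold fI; push_cast; omega
      rw [h]), sum_seg_ref]
    congr 1 <;> push_cast <;> ring

lemma sum_fI_outer {M : Type*} [AddCommMonoid M] (H : ℤ → M) (hk : 1 ≤ k) :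
    ∑ i ∈ Finset.Icc 2 (2*k), H (fI k i)
      = (∑ c ∈ Finset.Icc (1:ℤ) k, H c) + ∑ c ∈ Finset.Icc (1:ℤ) ((k:ℤ)-1), H c := by
  have hsplit : Finset.Icc 2 (2*k) = Finset.Icc 2 (k+1) ∪ Finset.Icc (k+2) (2*k) := by
    ext x; simp only [Finset.mem_Icc, Finset.mem_union]; omega
  have hdisj : Disjoint (Finset.Icc 2 (k+1)) (Finset.Icc (k+2) (2*k)) := by
    rw [Finset.disjoint_left]; intro x hx hy
    simp only [Finset.mem_Icc] at hx hy; omega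
  rw [hsplit, Finset.sum_union hdisj]
  congr 1
  · rw [Finset.sum_congr rfl (fun j hj => by
      have h : fI k j = (j:ℤ) - 1 := by
        simp only [Finset.mem_Icc] at hj; unfold fI; omega
      rw [h]), sum_seg_lin]
    congr 1 <;> push_cast <;> ring
  · rw [Finset.sum_congr rfl (fun j hj => by
      have h : fI k j = ((2*k+1 : ℕ):ℤ) - j := by
        simp only [Finset.mem_Icc] at hj; unfold fI; push_cast; omega
      rw [h]), sum_seg_ref]
    congr 1 <;> push_cast <;> ring

lemma sum_ite_cast (a b : ℕ) (z : ℤ) (g : ℕ → ℕ) :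
    ∑ i ∈ Finset.Icc a b, (if z = (i:ℤ) then g i else 0)
      = if (a:ℤ) ≤ z ∧ z ≤ (b:ℤ) then g z.toNat else 0 := by
  by_cases h : (a:ℤ) ≤ z ∧ z ≤ (b:ℤ)
  · rw [if_pos h, Finset.sum_eq_single_of_mem z.toNat (by simp only [Finset.mem_Icc]; omega)]
    · rw [if_pos (by omega)]
    · intro i hi hne
      rw [if_neg (by simp only [Finset.mem_Icc] at hi; omega)]
  · rw [if_neg h]
    apply Finset.sum_eq_zero
    intro i hi
    rw [if_neg (by simp only [Finset.mem_Icc] at hi; omega)]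

lemma sum_ite_interval_int (K l u : ℤ) :
    ∑ c ∈ Finset.Icc 1 K, (if l ≤ c ∧ c ≤ u then (1:ℕ) else 0)
      = (min K u + 1 - max 1 l).toNat := by
  classical
  rw [← Finset.card_filter]
  have h : (Finset.Icc 1 K).filter (fun c => l ≤ c ∧ c ≤ u)
      = Finset.Icc (max 1 l) (min K u) := by
    ext x; simp only [Finset.mem_Icc, Finset.mem_filter]; omega
  rw [h, Int.card_Icc]

lemma sum_count_seg (z : ℤ) (c : ℤ) (D : ℤ) :
    ∑ d ∈ Finset.Icc (0:ℤ) D, Multiset.count z ({c - d} : Multiset ℤ)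
      = if z ≤ c ∧ c ≤ D + z then (1:ℕ) else 0 := by
  have h1 : ∀ d ∈ Finset.Icc (0:ℤ) D,
      Multiset.count z ({c - d} : Multiset ℤ) = if d = c - z then (1:ℕ) else 0 := by
    intro d _
    rw [Multiset.count_singleton]
    exact if_congr (by omega) rfl rfl
  rw [Finset.sum_congr rfl h1, Finset.sum_ite_eq' (Finset.Icc (0:ℤ) D)]
  simp only [Finset.mem_Icc]
  exact if_congr (by omega) rfl rfl

end Aux3
section Aux4
variable {k : ℕ}

lemma pred_iff {i j : ℕ} (hk : 1 ≤ k) (hi : 1 ≤ i) (hi2 : i ≤ 2*k+1) (hj : 1 ≤ j)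
    (hj2 : j ≤ 2*k+1) :
    seaweedPos [2*k,1] [1,2*k] i j ↔
      (i = 1 ∧ j = 1) ∨ (i = 2*k+1 ∧ j = 2*k+1) ∨ (2 ≤ i ∧ i ≤ 2*k) := by
  unfold seaweedPos
  rw [sba, sbb]
  omega

open scoped Classical in
lemma spectrum_explicit (hk : 1 ≤ k) :
    spectrum [2*k,1] [1,2*k]
      = ({0} + ({0} + ∑ i ∈ Finset.Icc 2 (2*k), ∑ j ∈ Finset.Icc 1 (2*k+1),
          ({fI k i - fI k j} : Multiset ℤ))) - {0} := by
  have hsum : [2*k, 1].sum = 2*k+1 := by simp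
  rw [spectrum, hsum, specBlock_sum]
  congr 1
  have hGall : ∀ i ∈ Finset.Icc 1 (2*k+1),
      (∑ j ∈ Finset.Icc 1 (2*k+1),
        if seaweedPos [2*k,1] [1,2*k] i j
        then ({pathWeight [2*k,1] [1,2*k] i j} : Multiset ℤ) else 0)
      = (if i = 1 then {0} else if i = 2*k+1 then {0}
          else ∑ j ∈ Finset.Icc 1 (2*k+1), ({fI k i - fI k j} : Multiset ℤ)) := by
    intro i hi
    simp only [Finset.mem_Icc] at hi
    by_cases h1 : i = 1
    · subst h1
      rw [if_pos rfl]
      have h : ∀ j ∈ Finset.Icc 1 (2*k+1),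
          (if seaweedPos [2*k,1] [1,2*k] 1 j
            then ({pathWeight [2*k,1] [1,2*k] 1 j} : Multiset ℤ) else 0)
          = (if j = 1 then ({pathWeight [2*k,1] [1,2*k] 1 j} : Multiset ℤ) else 0) := by
        intro j hj
        simp only [Finset.mem_Icc] at hj
        exact if_congr ((pred_iff hk (le_refl 1) (by omega) hj.1 hj.2).trans (by omega)) rfl rfl
      rw [Finset.sum_congr rfl h, Finset.sum_ite_eq' (Finset.Icc 1 (2*k+1)) 1,
        if_pos (by simp only [Finset.mem_Icc]; omega),
        pathWeight_eq (le_refl 1) (by omega) (le_refl 1) (by omega), sub_self]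
    · by_cases h2 : i = 2*k+1
      · subst h2
        rw [if_neg h1, if_pos rfl]
        have h : ∀ j ∈ Finset.Icc 1 (2*k+1),
            (if seaweedPos [2*k,1] [1,2*k] (2*k+1) j
              then ({pathWeight [2*k,1] [1,2*k] (2*k+1) j} : Multiset ℤ) else 0)
            = (if j = 2*k+1 then ({pathWeight [2*k,1] [1,2*k] (2*k+1) j} : Multiset ℤ)
                else 0) := by
          intro j hj
          simp only [Finset.mem_Icc] at hj
          exact if_congr ((pred_iff hk (by omega) (le_refl _) hj.1 hj.2).trans (by omega)) rfl rfl
        rw [Finset.sum_congr rfl h, Finset.sum_ite_eq' (Finset.Icc 1 (2*k+1)) (2*k+1),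
          if_pos (by simp only [Finset.mem_Icc]; omega),
          pathWeight_eq (by omega) (le_refl _) (by omega) (le_refl _), sub_self]
      · rw [if_neg h1, if_neg h2]
        apply Finset.sum_congr rfl
        intro j hj
        simp only [Finset.mem_Icc] at hj
        rw [if_pos ((pred_iff hk hi.1 hi.2 hj.1 hj.2).mpr (by omega)),
          pathWeight_eq hi.1 hi.2 hj.1 hj.2]
  rw [Finset.sum_congr rfl hGall]
  rw [← Finset.add_sum_erase _ _ (show 1 ∈ Finset.Icc 1 (2*k+1) by
    simp only [Finset.mem_Icc]; omega)]
  rw [← Finset.add_sum_erase _ _ (show 2*k+1 ∈ (Finset.Icc 1 (2*k+1)).erase 1 by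
    simp only [Finset.mem_erase, Finset.mem_Icc]; omega)]
  have herase : ((Finset.Icc 1 (2*k+1)).erase 1).erase (2*k+1) = Finset.Icc 2 (2*k) := by
    ext x; simp only [Finset.mem_erase, Finset.mem_Icc]; omega
  rw [herase, if_pos rfl, if_neg (by omega), if_pos rfl]
  congr 1
  congr 1
  apply Finset.sum_congr rfl
  intro i hi
  simp only [Finset.mem_Icc] at hi
  rw [if_neg (by omega), if_neg (by omega)]

lemma spectrum_count (hk : 1 ≤ k) (z : ℤ) :
    Multiset.count z (spectrum [2*k,1] [1,2*k])
      = ((if z = 0 then 1 else 0) + ((if z = 0 then 1 else 0)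
          + ((min (k:ℤ) ((k:ℤ)+z) + 1 - max 1 z).toNat
            + (min (k:ℤ) ((k:ℤ)-1+z) + 1 - max 1 z).toNat
            + ((min ((k:ℤ)-1) ((k:ℤ)+z) + 1 - max 1 z).toNat
            + (min ((k:ℤ)-1) ((k:ℤ)-1+z) + 1 - max 1 z).toNat))))
        - (if z = 0 then 1 else 0) := by
  rw [spectrum_explicit hk, Multiset.count_sub, Multiset.count_add, Multiset.count_add,
    Multiset.count_singleton, Multiset.count_sum']
  congr 2
  have hinner : ∀ i ∈ Finset.Icc 2 (2*k),
      Multiset.count z (∑ j ∈ Finset.Icc 1 (2*k+1), ({fI k i - fI k j} : Multiset ℤ))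
        = (∑ d ∈ Finset.Icc (0:ℤ) k, Multiset.count z ({fI k i - d} : Multiset ℤ))
          + ∑ d ∈ Finset.Icc (0:ℤ) ((k:ℤ)-1),
              Multiset.count z ({fI k i - d} : Multiset ℤ) := by
    intro i _
    rw [Multiset.count_sum']
    exact sum_fI_inner (fun d => Multiset.count z ({fI k i - d} : Multiset ℤ)) hk
  rw [Finset.sum_congr rfl hinner, Finset.sum_add_distrib,
    sum_fI_outer (fun c => ∑ d ∈ Finset.Icc (0:ℤ) k,
      Multiset.count z ({c - d} : Multiset ℤ)) hk,
    sum_fI_outer (fun c => ∑ d ∈ Finset.Icc (0:ℤ) ((k:ℤ)-1),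
      Multiset.count z ({c - d} : Multiset ℤ)) hk]
  have hseg : ∀ (K D : ℤ),
      ∑ c ∈ Finset.Icc (1:ℤ) K, ∑ d ∈ Finset.Icc (0:ℤ) D,
        Multiset.count z ({c - d} : Multiset ℤ)
      = (min K (D + z) + 1 - max 1 z).toNat := by
    intro K D
    rw [Finset.sum_congr rfl (fun c _ => sum_count_seg z c D), sum_ite_interval_int]
  rw [hseg, hseg, hseg, hseg]
  omega

end Aux4
section Aux5
variable {k : ℕ}

lemma rhs_count (k : ℕ) (z : ℤ) :
    Multiset.count z (∑ i ∈ Finset.Icc 1 k,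
        (Multiset.replicate (4 * i - 2) ((i : ℤ) - k) +
          Multiset.replicate (4 * i - 2) ((k : ℤ) - i + 1)))
      = (if (1:ℤ) ≤ z + k ∧ z + k ≤ (k:ℕ) then 4 * (z + k).toNat - 2 else 0)
        + (if (1:ℤ) ≤ (k:ℤ) + 1 - z ∧ (k:ℤ) + 1 - z ≤ (k:ℕ)
            then 4 * ((k:ℤ) + 1 - z).toNat - 2 else 0) := by
  rw [Multiset.count_sum']
  have h : ∀ i ∈ Finset.Icc 1 k,
      Multiset.count z (Multiset.replicate (4 * i - 2) ((i : ℤ) - k) +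
          Multiset.replicate (4 * i - 2) ((k : ℤ) - i + 1))
        = (if z + k = (i:ℤ) then 4 * i - 2 else 0)
          + (if (k:ℤ) + 1 - z = (i:ℤ) then 4 * i - 2 else 0) := by
    intro i _
    rw [Multiset.count_add, Multiset.count_replicate, Multiset.count_replicate]
    exact congrArg₂ (· + ·) (if_congr (by omega) rfl rfl) (if_congr (by omega) rfl rfl)
  rw [Finset.sum_congr rfl h, Finset.sum_add_distrib,
    sum_ite_cast 1 k (z + k) (fun i => 4 * i - 2),
    sum_ite_cast 1 k ((k:ℤ) + 1 - z) (fun i => 4 * i - 2)]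
  norm_num

lemma spectrum_eq (hk : 1 ≤ k) :
    spectrum [2*k, 1] [1, 2*k]
      = ∑ i ∈ Finset.Icc 1 k,
          (Multiset.replicate (4 * i - 2) ((i : ℤ) - k) +
            Multiset.replicate (4 * i - 2) ((k : ℤ) - i + 1)) := by
  ext z
  rw [spectrum_count hk, rhs_count]
  split_ifs <;> omega

lemma cnt_formula (hk : 1 ≤ k) (z : ℤ) :
    Multiset.count z (spectrum [2*k, 1] [1, 2*k])
      = if z ≤ 0 then (4 * ((k:ℤ) + z) - 2).toNat else (4 * ((k:ℤ) - z) + 2).toNat := by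
  rw [spectrum_count hk]
  split_ifs <;> omega

lemma toFinset_spectrum (hk : 1 ≤ k) :
    (spectrum [2*k, 1] [1, 2*k]).toFinset = Finset.Icc (1 - (k:ℤ)) k := by
  ext z
  rw [Multiset.mem_toFinset, ← Multiset.count_pos, cnt_formula hk, Finset.mem_Icc]
  split_ifs <;> omega

lemma sort_spectrum (hk : 1 ≤ k) :
    (spectrum [2*k, 1] [1, 2*k]).toFinset.sort (· ≤ ·)
      = List.map (fun t : ℕ => 1 - (k:ℤ) + t) (List.range (2*k)) := by
  set L := List.map (fun t : ℕ => 1 - (k:ℤ) + t) (List.range (2*k)) with hL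
  have hpl : L.Pairwise (· < ·) := by
    rw [hL, List.pairwise_map]
    exact (List.pairwise_lt_range (n := 2*k)).imp (fun h => by omega)
  have hnd : L.Nodup := hpl.imp (fun h => ne_of_lt h)
  have hval : (L : Multiset ℤ) = (Finset.Icc (1 - (k:ℤ)) k).val := by
    rw [Multiset.Nodup.ext (by exact hnd) (Finset.Icc (1 - (k:ℤ)) k).nodup]
    intro z
    simp only [hL, Multiset.mem_coe, List.mem_map, List.mem_range, ← Finset.mem_def,
      Finset.mem_Icc]
    constructor
    · rintro ⟨t, ht, rfl⟩; omega
    · intro hz; exact ⟨(z - (1 - (k:ℤ))).toNat, by omega, by omega⟩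
  rw [toFinset_spectrum hk]
  refine List.Perm.eq_of_pairwise' (Finset.pairwise_sort _ _) (hpl.imp fun h => le_of_lt h) ?_
  have h1 : ((Finset.Icc (1 - (k:ℤ)) k).sort (· ≤ ·) : Multiset ℤ)
      = (Finset.Icc (1 - (k:ℤ)) k).val := by
    rw [← Multiset.coe_toList (Finset.Icc (1 - (k:ℤ)) k).val]
    exact Multiset.coe_eq_coe.mpr (Finset.sort_perm_toList _ _)
  exact Multiset.coe_eq_coe.mp (h1.trans hval.symm)

lemma toNat_mul_le (x y w : ℤ) (h : x * y ≤ w * w) (hw : 0 ≤ w) :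
    x.toNat * y.toNat ≤ w.toNat ^ 2 := by
  rcases le_or_gt x 0 with hx | hx
  · simp [Int.toNat_of_nonpos hx]
  rcases le_or_gt y 0 with hy | hy
  · simp [Int.toNat_of_nonpos hy]
  have h2 : ((x.toNat * y.toNat : ℕ) : ℤ) ≤ ((w.toNat ^ 2 : ℕ) : ℤ) := by
    push_cast
    rw [Int.toNat_of_nonneg hx.le, Int.toNat_of_nonneg hy.le, Int.toNat_of_nonneg hw]
    nlinarith
  exact_mod_cast h2

lemma logconcave_spectrum (hk : 1 ≤ k) :
    HasLogConcaveSpectrum (spectrum [2*k, 1] [1, 2*k]) := by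
  intro i hi0 hilen
  rw [sort_spectrum hk, List.length_map, List.length_range] at hilen
  have e : ∀ m : ℕ, m < 2*k →
      ((spectrum [2*k, 1] [1, 2*k]).toFinset.sort (· ≤ ·)).getD m 0
        = 1 - (k:ℤ) + m := by
    intro m hm
    rw [sort_spectrum hk, List.getD_eq_getElem _ _ (by
      rw [List.length_map, List.length_range]; exact hm)]
    simp
  rw [e (i-1) (by omega), e (i+1) (by omega), e i (by omega),
    cnt_formula hk, cnt_formula hk, cnt_formula hk]
  have hc : ((i - 1 : ℕ) : ℤ) = (i:ℤ) - 1 := by omega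
  rw [hc]
  obtain ⟨hi1, hi2⟩ : (1:ℤ) ≤ (i:ℤ) ∧ (i:ℤ) + 1 < 2*(k:ℤ) := by
    constructor <;> [exact_mod_cast hi0; exact_mod_cast hilen]
  push_cast
  split_ifs <;>
    first
      | (exfalso; omega)
      | (refine toNat_mul_le _ _ _ (by nlinarith) (by omega))
end Aux5

/-- For `k ≥ 1`, the spectrum of the Frobenius type-A seaweed `p^A(2k|1 / 1|2k)` is
`⋃_{i=1}^{k} {(-k+i)^{4i-2}, (k-i+1)^{4i-2}}`, and the seaweed has the log-concave
spectrum property. -/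
theorem statement14 (k : ℕ) (hk : 1 ≤ k) :
    spectrum [2 * k, 1] [1, 2 * k]
        = ∑ i ∈ Finset.Icc 1 k,
            (Multiset.replicate (4 * i - 2) ((i : ℤ) - k) +
              Multiset.replicate (4 * i - 2) ((k : ℤ) - i + 1)) ∧
    HasLogConcaveSpectrum (spectrum [2 * k, 1] [1, 2 * k]) :=
  ⟨spectrum_eq hk, logconcave_spectrum hk⟩

end Seaweed
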